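/- If d is a continuous derivation on a complex Banach algebra B and a ∈ B satisfies d²(a) = 0, then d(a) is quasi-nilpotent (i.e., its spectral radius is 0). -/

import Mathlib

open Filter ENNReal NNReal

/-- Kleinecke–Shirokov: if `d` is a continuous (linear) derivation on a complex Banach
algebra `B` and `d² a = 0`, then `d a` is quasi-nilpotent. -/
theorem stmt0 {B : Type*} [NormedRing B] [NormedAlgebra ℂ B] [CompleteSpace B]
    (d : B →L[ℂ] B) (hd : ∀ x y : B, d (x * y) = d x * y + x * d y)
    (a : B) (ha : d (d a) = 0) :
    spectralRadius ℂ (d a) = 0 := by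
  set b := d a with hb
  -- d (b ^ n) = 0
  have hdbn : ∀ n : ℕ, d (b ^ n) = 0 := by
    intro n
    induction n with
    | zero => simpa using hd 1 1
    | succ n ih =>
      rw [pow_succ, hd, ih, ha, zero_mul, mul_zero, add_zero]
  -- Leibniz-type identity
  have L1 : ∀ (m : ℕ) (x : B), d^[m+1] (a * x)
      = a * d^[m+1] x + (m+1) • (b * d^[m] x) := by
    intro m
    induction m with
    | zero => intro x; simp [hd a x, add_comm, hb]
    | succ m ih =>
      intro x
      rw [Function.iterate_succ_apply' d (m+1) (a*x), ih x, map_add, hd, map_nsmul, hd,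
        ha, zero_mul, zero_add, ← Function.iterate_succ_apply' d (m+1) x,
        ← Function.iterate_succ_apply' d m x]
      simp only [Nat.succ_eq_add_one]
      rw [succ_nsmul (b * (⇑d)^[m+1] x) (m+1)]
      abel
  -- main identity : dⁿ(aⁿ) = n! bⁿ
  have L2 : ∀ n : ℕ, d^[n] (a ^ n) = (n.factorial) • b ^ n := by
    intro n
    induction n with
    | zero => simp
    | succ n ih =>
      rw [pow_succ', L1 n (a^n), Function.iterate_succ_apply' d n (a^n), ih,
        map_nsmul, hdbn, smul_zero, mul_zero, zero_add,
        mul_smul_comm, ← pow_succ', smul_smul, Nat.factorial_succ]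
  -- norm bound for iterates
  have hiter : ∀ (n : ℕ) (x : B), ‖d^[n] x‖ ≤ ‖d‖ ^ n * ‖x‖ := by
    intro n
    induction n with
    | zero => simp
    | succ n ih =>
      intro x
      rw [Function.iterate_succ_apply' d n x]
      calc ‖d (d^[n] x)‖ ≤ ‖d‖ * ‖d^[n] x‖ := d.le_opNorm _
        _ ≤ ‖d‖ * (‖d‖ ^ n * ‖x‖) :=
            mul_le_mul_of_nonneg_left (ih x) (norm_nonneg d)
        _ = ‖d‖ ^ (n+1) * ‖x‖ := by ring
  -- norm bound: n! * ‖bⁿ‖ ≤ (‖d‖‖a‖)ⁿ for n ≥ 1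
  have key : ∀ n : ℕ, 0 < n → (n.factorial : ℝ) * ‖b ^ n‖ ≤ (‖d‖ * ‖a‖) ^ n := by
    intro n hn
    have h1 : ‖d^[n] (a ^ n)‖ ≤ ‖d‖ ^ n * ‖a‖ ^ n := by
      calc ‖d^[n] (a ^ n)‖ ≤ ‖d‖ ^ n * ‖a ^ n‖ := hiter n _
        _ ≤ ‖d‖ ^ n * ‖a‖ ^ n :=
          mul_le_mul_of_nonneg_left (norm_pow_le' a hn) (by positivity)
    rw [L2 n] at h1
    rw [mul_pow]
    calc (n.factorial : ℝ) * ‖b ^ n‖ = ‖(n.factorial : ℕ) • b ^ n‖ := by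
          rw [← Nat.cast_smul_eq_nsmul ℝ, norm_smul]
          simp
      _ ≤ ‖d‖ ^ n * ‖a‖ ^ n := h1
  -- conclude via ε-argument
  refine le_antisymm ?_ zero_le
  refine ENNReal.le_of_forall_pos_le_add fun ε hε _ => ?_
  rw [zero_add]
  set C : ℝ := ‖d‖ * ‖a‖ with hC
  have hεr : (0 : ℝ) < ε := hε
  set K : ℝ := ‖(1:B)‖ with hK
  have hK0 : 0 ≤ K := norm_nonneg _
  have htend := FloorSemiring.tendsto_pow_div_factorial_atTop (C / ε)
  have hone : (0:ℝ) < 1 / (K + 1) := by positivity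
  obtain ⟨N, hN⟩ := eventually_atTop.mp (htend.eventually_lt_const hone)
  set n : ℕ := N + 1 with hn
  have hq : (C / ε) ^ n / n.factorial < 1 / (K + 1) := hN n (Nat.le_succ N)
  have hbn : ‖b ^ n‖ ≤ C ^ n / n.factorial := by
    rw [le_div_iff₀ (by positivity : (0:ℝ) < (n.factorial : ℝ))]
    rw [mul_comm]
    exact key n (Nat.succ_pos N)
  have hCn : C ^ n / n.factorial < ε ^ n / (K + 1) := by
    have : (C / ε) ^ n / n.factorial = C ^ n / n.factorial / ε ^ n := by
      rw [div_pow]; ring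
    rw [this] at hq
    calc C ^ n / n.factorial = (C ^ n / n.factorial / ε ^ n) * ε ^ n := by
          field_simp
      _ < (1 / (K + 1)) * ε ^ n := by
          exact mul_lt_mul_of_pos_right hq (by positivity)
      _ = ε ^ n / (K + 1) := by ring
  have hreal : ‖b ^ n‖ * K ≤ (ε : ℝ) ^ n := by
    have h2 : ‖b ^ n‖ ≤ ε ^ n / (K + 1) := le_of_lt (lt_of_le_of_lt hbn hCn)
    calc ‖b ^ n‖ * K ≤ (ε ^ n / (K + 1)) * K :=
          mul_le_mul_of_nonneg_right h2 hK0
      _ ≤ ε ^ n := by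
          rw [div_mul_eq_mul_div, div_le_iff₀ (by positivity)]
          nlinarith [pow_pos hεr n]
  have hnn : (‖b ^ n‖₊ : ℝ≥0∞) * (‖(1:B)‖₊ : ℝ≥0∞) ≤ ((ε : ℝ≥0∞)) ^ (n : ℕ) := by
    rw [← ENNReal.coe_mul, ← ENNReal.coe_pow]
    exact_mod_cast hreal
  have hmain := spectrum.spectralRadius_le_pow_nnnorm_pow_one_div ℂ b N
  have hexp : (0:ℝ) ≤ 1 / (N + 1) := by positivity
  calc spectralRadius ℂ b
      ≤ (‖b ^ (N+1)‖₊ : ℝ≥0∞) ^ (1 / (N + 1) : ℝ) *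
        (‖(1 : B)‖₊ : ℝ≥0∞) ^ (1 / (N + 1) : ℝ) := hmain
    _ = ((‖b ^ n‖₊ : ℝ≥0∞) * (‖(1:B)‖₊ : ℝ≥0∞)) ^ (1 / (N + 1) : ℝ) := by
        rw [ENNReal.mul_rpow_of_nonneg _ _ hexp]
    _ ≤ (((ε : ℝ≥0∞)) ^ (n : ℕ)) ^ (1 / (N + 1) : ℝ) :=
        ENNReal.rpow_le_rpow hnn hexp
    _ = (ε : ℝ≥0∞) := by
        rw [← ENNReal.rpow_natCast, ← ENNReal.rpow_mul]
        norm_num [hn]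
        rw [mul_inv_cancel₀ (by positivity : ((N:ℝ) + 1) ≠ 0), ENNReal.rpow_one]
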